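/- For 0 < r < 1, the off-center reflection with Ω = π is given on the unit circle by the Blaschke-type product R(z) = −z²(1 − rz)/(z − r); that is, for all x ∈ ℝ, R(e^{ix}) = e^{iR̃_{r,π}(x)} where R̃_{r,π}(x) = x + π − 2ι(x) and ι(x) = Arg(cos x − r + i·sin x) − x. In particular |R(z)| = 1 whenever |z| = 1. -/

import Mathlib

open Real

/-- The incident angle function of the off-center reflection. -/
noncomputable def iota (r x : ℝ) : ℝ :=
  Complex.arg ((Real.cos x - r : ℝ) + (Real.sin x : ℝ) * Complex.I) - x

/-- Lift of the off-center reflection taking 0 to Ω. -/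
noncomputable def Rt (r Ω x : ℝ) : ℝ := x + Ω - 2 * iota r x
theorem stmt_19 (r : ℝ) (hr0 : 0 < r) (hr1 : r < 1) :
    (∀ x : ℝ,
      -(Complex.exp (Complex.I * x)) ^ 2 *
          (1 - (r : ℂ) * Complex.exp (Complex.I * x)) /
          (Complex.exp (Complex.I * x) - (r : ℂ)) =
        Complex.exp (Complex.I * (Rt r Real.pi x : ℝ))) ∧
    (∀ z : ℂ, ‖z‖ = 1 →
      ‖-z ^ 2 * (1 - (r : ℂ) * z) / (z - (r : ℂ))‖ = 1) := by
  constructor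
  · intro x
    set w : ℂ := ((Real.cos x - r : ℝ) + (Real.sin x : ℝ) * Complex.I) with hw
    have hwe : w = Complex.exp (Complex.I * x) - r := by
      rw [hw, show Complex.I * (x:ℂ) = (x:ℂ) * Complex.I from mul_comm _ _, Complex.exp_mul_I]
      push_cast
      ring
    have hw0 : w ≠ 0 := by
      rw [hwe, sub_ne_zero]
      intro h
      have := congrArg (‖·‖) h
      rw [show Complex.I * (x:ℂ) = (x:ℂ) * Complex.I from mul_comm _ _,
        Complex.norm_exp_ofReal_mul_I, Complex.norm_of_nonneg hr0.le] at this
      linarith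
    set a : ℝ := Complex.arg w with ha
    set R : ℝ := ‖w‖ with hR
    have hrep : w = (R:ℂ) * Complex.exp ((a:ℂ) * Complex.I) :=
      (Complex.norm_mul_exp_arg_mul_I w).symm
    have hcrep : (starRingEnd ℂ) w = (R:ℂ) * Complex.exp (-(a:ℂ) * Complex.I) := by
      rw [hrep, map_mul, ← Complex.exp_conj, map_mul, Complex.conj_ofReal, Complex.conj_I,
        Complex.conj_ofReal]
      ring_nf
    have hcw : (starRingEnd ℂ) w = Complex.exp (-(Complex.I * x)) - r := by
      rw [hwe, map_sub, ← Complex.exp_conj, map_mul, Complex.conj_I, Complex.conj_ofReal,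
        Complex.conj_ofReal]
      ring_nf
    have hRt : Rt r Real.pi x = 3 * x + Real.pi - 2 * a := by
      simp only [Rt, iota, ← hw, ← ha]
      ring
    have he : Complex.exp (Complex.I * x) * Complex.exp (-(Complex.I * x)) = 1 := by
      rw [← Complex.exp_add]; simp
    have h1 : 1 - (r:ℂ) * Complex.exp (Complex.I * x)
        = Complex.exp (Complex.I * x) * (starRingEnd ℂ) w := by
      rw [hcw]
      linear_combination -he
    rw [h1, show Complex.exp (Complex.I * x) - (r:ℂ) = w from hwe.symm, hcrep, hRt,
      div_eq_iff hw0, hrep]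
    push_cast
    rw [show Complex.I * (3 * (x:ℂ) + (Real.pi:ℂ) - 2 * (a:ℂ))
        = Complex.I * (x:ℂ) + (Complex.I * (x:ℂ) + (Complex.I * (x:ℂ)
          + ((Real.pi:ℂ) * Complex.I + (-(a:ℂ) * Complex.I + -(a:ℂ) * Complex.I)))) from by ring,
      Complex.exp_add, Complex.exp_add, Complex.exp_add, Complex.exp_add, Complex.exp_add,
      Complex.exp_pi_mul_I]
    have h2 : Complex.exp (-(a:ℂ) * Complex.I) * Complex.exp ((a:ℂ) * Complex.I) = 1 := by
      rw [← Complex.exp_add]; simp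
    linear_combination ((Complex.exp (Complex.I * (x:ℂ)))^3 * (R:ℂ)
      * Complex.exp (-(a:ℂ) * Complex.I)) * h2
  · intro z hz
    have hz0 : z ≠ 0 := by
      intro h; rw [h] at hz; simp at hz
    have hzr : z - (r:ℂ) ≠ 0 := by
      rw [sub_ne_zero]
      intro h
      rw [h, Complex.norm_of_nonneg hr0.le] at hz
      linarith
    have key : ‖1 - (r:ℂ) * z‖ = ‖z - (r:ℂ)‖ := by
      have h1 : ‖1 - (r:ℂ) * z‖ = ‖(starRingEnd ℂ) (1 - (r:ℂ) * z)‖ :=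
        (Complex.norm_conj _).symm
      have hzz : z * (starRingEnd ℂ) z = 1 := by
        rw [Complex.mul_conj, Complex.normSq_eq_norm_sq, hz]; norm_num
      have h2 : z * (starRingEnd ℂ) (1 - (r:ℂ) * z) = z - (r:ℂ) := by
        rw [map_sub, map_one, map_mul, Complex.conj_ofReal]
        linear_combination (-(r:ℂ)) * hzz
      calc ‖1 - (r:ℂ) * z‖
          = ‖z‖ * ‖(starRingEnd ℂ) (1 - (r:ℂ) * z)‖ := by
            rw [hz, one_mul, h1]
        _ = ‖z * (starRingEnd ℂ) (1 - (r:ℂ) * z)‖ := (norm_mul _ _).symm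
        _ = ‖z - (r:ℂ)‖ := by rw [h2]
    rw [norm_div, norm_mul, norm_neg, norm_pow, hz, one_pow, one_mul, key,
      div_self (norm_ne_zero_iff.mpr hzr)]
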